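/- Let μ > 0, σ > 0, α > 1, and a < b be real numbers. Define the truncated normal densities p(x) = (1/(μσ√(2π))) · exp(-x²/(2μ²σ²)) / (Φ(b/(μσ)) - Φ(a/(μσ))) and q(x) = (1/(μσ√(2π))) · exp(-(x-μ)²/(2μ²σ²)) / (Φ((b-μ)/(μσ)) - Φ((a-μ)/(μσ))) for x ∈ [a,b]. Then (1/(α-1)) · ln(∫_a^b q(x)^α · p(x)^(1-α) dx) = α/(2σ²) + (1/(α-1)) · ln[ (Φ(b/(μσ)) - Φ(a/(μσ)))^(α-1) / (Φ((b-μ)/(μσ)) - Φ((a-μ)/(μσ)))^α · (Φ((b-αμ)/(μσ)) - Φ((a-αμ)/(μσ))) ]. -/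

import Mathlib

open MeasureTheory Real Filter

/-- The standard normal cumulative distribution function
`Φ(x) = (√(2π))⁻¹ ∫_{-∞}^x exp(-t²/2) dt`. -/
noncomputable def stdNormalCDF (x : ℝ) : ℝ :=
  (Real.sqrt (2 * Real.pi))⁻¹ * ∫ t in Set.Iic x, Real.exp (-t ^ 2 / 2)

/-- The standard normal density `φ(x) = (√(2π))⁻¹ exp(-x²/2)`. -/
noncomputable def stdNormalPDF (x : ℝ) : ℝ :=
  (Real.sqrt (2 * Real.pi))⁻¹ * Real.exp (-x ^ 2 / 2)

/-- Closed-form order-α Rényi divergence between two truncated normals on `[a,b]`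
(`N(μ,μ²σ²)` against `N(0,μ²σ²)`), from the appendix of the paper. -/
lemma gauss_int : Integrable (fun t : ℝ => Real.exp (-t ^ 2 / 2)) := by
  have := integrable_exp_neg_mul_sq (by norm_num : (0:ℝ) < 1/2)
  convert this using 2 with t
  ring_nf

lemma cdf_sub (u v : ℝ) : stdNormalCDF v - stdNormalCDF u =
    (Real.sqrt (2 * Real.pi))⁻¹ * ∫ t in u..v, Real.exp (-t ^ 2 / 2) := by
  unfold stdNormalCDF
  rw [← mul_sub, intervalIntegral.integral_Iic_sub_Iic gauss_int.integrableOn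
    gauss_int.integrableOn]

lemma cdf_pos {u v : ℝ} (h : u < v) : 0 < stdNormalCDF v - stdNormalCDF u := by
  rw [cdf_sub]
  have h2 : (0:ℝ) < Real.sqrt (2 * Real.pi) := Real.sqrt_pos.2 (by positivity)
  have : 0 < ∫ t in u..v, Real.exp (-t ^ 2 / 2) :=
    intervalIntegral.intervalIntegral_pos_of_pos gauss_int.intervalIntegrable (fun x => Real.exp_pos _) h
  positivity

lemma gauss_interval (c m a b : ℝ) (hc : 0 < c) :
    (∫ x in a..b, 1 / (c * Real.sqrt (2 * Real.pi)) * Real.exp (-(x - m) ^ 2 / (2 * c ^ 2)))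
      = stdNormalCDF ((b - m) / c) - stdNormalCDF ((a - m) / c) := by
  rw [cdf_sub]
  rw [intervalIntegral.integral_const_mul]
  have h1 : ∀ x : ℝ, Real.exp (-(x - m) ^ 2 / (2 * c ^ 2))
      = (fun t => Real.exp (-t ^ 2 / 2)) (c⁻¹ * x + (-(m/c))) := by
    intro x
    simp only
    congr 1
    field_simp
    ring
  simp only [h1]
  have hcomp := intervalIntegral.integral_comp_mul_add (a := a) (b := b)
    (fun t : ℝ => Real.exp (-t ^ 2 / 2)) (by positivity : c⁻¹ ≠ (0:ℝ)) (-(m/c))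
  rw [hcomp]
  have e1 : c⁻¹ * a + -(m / c) = (a - m) / c := by field_simp; ring
  have e2 : c⁻¹ * b + -(m / c) = (b - m) / c := by field_simp; ring
  rw [e1, e2, inv_inv, smul_eq_mul]
  have h2 : (0:ℝ) < Real.sqrt (2 * Real.pi) := Real.sqrt_pos.2 (by positivity)
  field_simp

lemma key_pt (μ σ α : ℝ) (P Q : ℝ) (hμ : 0 < μ) (hσ : 0 < σ) (hP : 0 < P) (hQ : 0 < Q)
    (x : ℝ) :
    (1 / (μ * σ * Real.sqrt (2 * Real.pi)) * Real.exp (-(x - μ) ^ 2 / (2 * μ ^ 2 * σ ^ 2)) / Q) ^ α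
      * (1 / (μ * σ * Real.sqrt (2 * Real.pi)) * Real.exp (-x ^ 2 / (2 * μ ^ 2 * σ ^ 2)) / P)
        ^ (1 - α)
    = Real.exp (α * (α - 1) / (2 * σ ^ 2)) * P ^ (α - 1) / Q ^ α *
      (1 / (μ * σ * Real.sqrt (2 * Real.pi)) *
        Real.exp (-(x - α * μ) ^ 2 / (2 * (μ * σ) ^ 2))) := by
  have hs : (0:ℝ) < Real.sqrt (2 * Real.pi) := Real.sqrt_pos.2 (by positivity)
  set A := 1 / (μ * σ * Real.sqrt (2 * Real.pi)) with hAdef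
  have hA : 0 < A := by positivity
  rw [Real.div_rpow (by positivity) hQ.le, Real.div_rpow (by positivity) hP.le,
    Real.mul_rpow hA.le (Real.exp_pos _).le, Real.mul_rpow hA.le (Real.exp_pos _).le,
    ← Real.exp_mul, ← Real.exp_mul]
  have h1 : (P ^ (1 - α))⁻¹ = P ^ (α - 1) := by
    rw [← Real.rpow_neg hP.le]; norm_num
  have hAA : A ^ α * A ^ (1 - α) = A := by
    rw [← Real.rpow_add hA]; norm_num
  have hE : Real.exp (-(x - μ) ^ 2 / (2 * μ ^ 2 * σ ^ 2) * α) *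
      Real.exp (-x ^ 2 / (2 * μ ^ 2 * σ ^ 2) * (1 - α)) =
      Real.exp (α * (α - 1) / (2 * σ ^ 2)) *
        Real.exp (-(x - α * μ) ^ 2 / (2 * (μ * σ) ^ 2)) := by
    rw [← Real.exp_add, ← Real.exp_add]; congr 1; field_simp; ring
  linear_combination (A ^ α * Real.exp (-(x - μ) ^ 2 / (2 * μ ^ 2 * σ ^ 2) * α) * (Q ^ α)⁻¹ *
      A ^ (1 - α) * Real.exp (-x ^ 2 / (2 * μ ^ 2 * σ ^ 2) * (1 - α))) * h1 +
    (Real.exp (-(x - μ) ^ 2 / (2 * μ ^ 2 * σ ^ 2) * α) *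
      Real.exp (-x ^ 2 / (2 * μ ^ 2 * σ ^ 2) * (1 - α)) * P ^ (α - 1) * (Q ^ α)⁻¹) * hAA +
    (A * P ^ (α - 1) * (Q ^ α)⁻¹) * hE

theorem renyi_truncated_normal_interval' (μ σ α a b : ℝ)
    (hμ : 0 < μ) (hσ : 0 < σ) (hα : 1 < α) (hab : a < b) :
    (1 / (α - 1)) * Real.log (∫ x in a..b,
        ((1 / (μ * σ * Real.sqrt (2 * Real.pi))) *
            Real.exp (-(x - μ) ^ 2 / (2 * μ ^ 2 * σ ^ 2)) /
            (stdNormalCDF ((b - μ) / (μ * σ)) -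
              stdNormalCDF ((a - μ) / (μ * σ)))) ^ α *
        ((1 / (μ * σ * Real.sqrt (2 * Real.pi))) *
            Real.exp (-x ^ 2 / (2 * μ ^ 2 * σ ^ 2)) /
            (stdNormalCDF (b / (μ * σ)) - stdNormalCDF (a / (μ * σ)))) ^ (1 - α)) =
      α / (2 * σ ^ 2) + (1 / (α - 1)) * Real.log (
        (stdNormalCDF (b / (μ * σ)) - stdNormalCDF (a / (μ * σ))) ^ (α - 1) /
          (stdNormalCDF ((b - μ) / (μ * σ)) - stdNormalCDF ((a - μ) / (μ * σ))) ^ α *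
          (stdNormalCDF ((b - α * μ) / (μ * σ)) -
            stdNormalCDF ((a - α * μ) / (μ * σ)))) := by
  have hc : (0:ℝ) < μ * σ := by positivity
  have hdiv : ∀ u v : ℝ, u < v → u / (μ * σ) < v / (μ * σ) := fun u v h =>
    div_lt_div_of_pos_right h hc
  have hP : 0 < stdNormalCDF (b / (μ * σ)) - stdNormalCDF (a / (μ * σ)) :=
    cdf_pos (hdiv _ _ hab)
  have hQ : 0 < stdNormalCDF ((b - μ) / (μ * σ)) - stdNormalCDF ((a - μ) / (μ * σ)) :=
    cdf_pos (hdiv _ _ (by linarith))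
  have hR : 0 < stdNormalCDF ((b - α * μ) / (μ * σ)) - stdNormalCDF ((a - α * μ) / (μ * σ)) :=
    cdf_pos (hdiv _ _ (by linarith))
  simp only [key_pt μ σ α _ _ hμ hσ hP hQ]
  rw [intervalIntegral.integral_const_mul, gauss_interval (μ * σ) (α * μ) a b hc]
  have hPa := Real.rpow_pos_of_pos hP (α - 1)
  have hQa := Real.rpow_pos_of_pos hQ α
  have hα1 : α - 1 ≠ 0 := sub_ne_zero.2 hα.ne'
  rw [Real.log_mul (by positivity) hR.ne', Real.log_mul (by positivity) hR.ne',
    Real.log_div (by positivity) hQa.ne', Real.log_div hPa.ne' hQa.ne',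
    Real.log_mul (Real.exp_ne_zero _) hPa.ne', Real.log_exp,
    Real.log_rpow hP, Real.log_rpow hQ]
  field_simp
  ring
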